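/- Let f, g : ℝ → ℝ be continuous non-negative functions and μ > 0. If for every t one has D⁺(f²)(t) ≤ −2μ f(t)² + 2 f(t) g(t), then for every t one has D⁺f(t) ≤ −μ f(t) + g(t). -/

import Mathlib

open Filter

/-- Upper right Dini derivative: `D⁺f(t) = limsup_{h→0⁺} (f(t+h) − f(t))/h`. -/
noncomputable def diniUpperRight (f : ℝ → ℝ) (t : ℝ) : EReal :=
  limsup (fun h : ℝ => (((f (t + h) - f t) / h : ℝ) : EReal)) (nhdsWithin 0 (Set.Ioi 0))

lemma eventually_slope_lt (u : ℝ → ℝ) (t : ℝ) (M r : ℝ) (hMr : M < r)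
    (hD : diniUpperRight u t ≤ (M : EReal)) :
    ∀ᶠ h' in nhdsWithin (0:ℝ) (Set.Ioi 0), (u (t + h') - u t) / h' < r := by
  have hlt : diniUpperRight u t < (r : EReal) :=
    lt_of_le_of_lt hD (by exact_mod_cast hMr)
  have := eventually_lt_of_limsup_lt hlt
  filter_upwards [this] with h' hh'
  exact_mod_cast hh'

/-- Key comparison lemma: `f c ≤ f a + b' * (c - a)` whenever `g ≤ b'` on `[a, c]`. -/
lemma keyA (f g : ℝ → ℝ) (μ : ℝ) (hμ : 0 < μ)
    (hf : Continuous f) (hf0 : ∀ t : ℝ, 0 ≤ f t) (hg0 : ∀ t : ℝ, 0 ≤ g t)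
    (h : ∀ t : ℝ, diniUpperRight (fun s => f s ^ 2) t ≤
      ((-2 * μ * f t ^ 2 + 2 * f t * g t : ℝ) : EReal))
    (a c : ℝ) (hac : a ≤ c) (b' : ℝ)
    (hb' : ∀ s ∈ Set.Icc a c, g s ≤ b') :
    f c ≤ f a + b' * (c - a) := by
  have key : ∀ ε : ℝ, 0 < ε → f c ≤ f a + b' * (c - a) + ε := by
    intro ε hε
    set u : ℝ → ℝ := fun s => Real.sqrt (f s ^ 2 + ε ^ 2) with hu
    have husq : ∀ s, u s ^ 2 = f s ^ 2 + ε ^ 2 := by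
      intro s
      rw [hu]
      exact Real.sq_sqrt (by positivity)
    have hunn : ∀ s, 0 ≤ u s := fun s => Real.sqrt_nonneg _
    have hupos : ∀ s, 0 < u s := fun s => Real.sqrt_pos.2 (by positivity)
    have hfu : ∀ s, f s ≤ u s := by
      intro s
      nlinarith [husq s, hunn s, hf0 s, sq_nonneg ε]
    have hucont : Continuous u :=
      Real.continuous_sqrt.comp ((hf.pow 2).add continuous_const)
    -- concavity of sqrt: 2 u x (u z - u x) ≤ f z ^ 2 - f x ^ 2
    have hconc : ∀ x z : ℝ, 2 * u x * (u z - u x) ≤ f z ^ 2 - f x ^ 2 := by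
      intro x z
      nlinarith [husq x, husq z, sq_nonneg (u z - u x), hunn x, hunn z]
    -- the mean value estimate for u
    have hmv : u c ≤ u a + b' * (c - a) := by
      have hmain := image_le_of_liminf_slope_right_le_deriv_boundary
        (f := u) (a := a) (b := c) hucont.continuousOn
        (B := fun x => u a + b' * (x - a)) (B' := fun _ => b')
        (by simp) (Continuous.continuousOn (by continuity))
        (fun x _ => by
          simpa using (((hasDerivWithinAt_id x (Set.Ici x)).sub_const a).const_mul b').const_add
            (u a))
        ?_ (Set.right_mem_Icc.2 hac)
      · exact hmain
      · intro x hx r hr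
        have hux := hupos x
        have hgx : g x ≤ b' := hb' x ⟨hx.1, hx.2.le⟩
        set M := -2 * μ * f x ^ 2 + 2 * f x * g x with hMdef
        have hM : M < 2 * u x * r := by
          nlinarith [hfu x, hg0 x, hf0 x, hupos x, sq_nonneg (f x)]
        set r' := (M + 2 * u x * r) / 2 with hr'def
        have hMr' : M < r' := by rw [hr'def]; linarith
        have hr'r : r' < 2 * u x * r := by rw [hr'def]; linarith
        have hev := eventually_slope_lt (fun s => f s ^ 2) x M r' hMr' (h x)
        have hpos : ∀ᶠ h' in nhdsWithin (0:ℝ) (Set.Ioi 0), (0:ℝ) < h' :=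
          eventually_mem_nhdsWithin
        have hev2 : ∀ᶠ h' in nhdsWithin (0:ℝ) (Set.Ioi 0),
            slope u x (x + h') < r := by
          filter_upwards [hev, hpos] with h' hq hh'
          have hslope : slope u x (x + h') = (u (x + h') - u x) / h' := by
            rw [slope_def_field]; ring_nf
          rw [hslope, div_lt_iff₀ hh']
          have hq' : f (x + h') ^ 2 - f x ^ 2 < r' * h' := by
            rw [div_lt_iff₀ hh'] at hq
            linarith
          have hc := hconc x (x + h')
          nlinarith [mul_pos hux hh']
        have htend : Tendsto (fun z : ℝ => z - x) (nhdsWithin x (Set.Ioi x))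
            (nhdsWithin 0 (Set.Ioi 0)) := by
          apply tendsto_nhdsWithin_of_tendsto_nhds_of_eventually_within
          · exact ((continuous_id.sub continuous_const).tendsto' x 0 (by simp)).mono_left
              nhdsWithin_le_nhds
          · filter_upwards [self_mem_nhdsWithin] with z hz
            simpa using sub_pos.2 (Set.mem_Ioi.1 hz)
        refine ((htend.eventually hev2).mono ?_).frequently
        intro z hz
        simpa using hz
    have h1 : f c ≤ u c := hfu c
    have h2 : u a ≤ f a + ε := by
      rw [hu]
      have hle : f a ^ 2 + ε ^ 2 ≤ (f a + ε) ^ 2 := by nlinarith [hf0 a, hε.le]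
      calc Real.sqrt (f a ^ 2 + ε ^ 2) ≤ Real.sqrt ((f a + ε) ^ 2) := Real.sqrt_le_sqrt hle
        _ = f a + ε := Real.sqrt_sq (by linarith [hf0 a])
    linarith
  exact le_of_forall_pos_le_add key

theorem dini_of_dini_sq_bound
    (f g : ℝ → ℝ) (μ : ℝ) (hμ : 0 < μ)
    (hf : Continuous f) (hg : Continuous g)
    (hf0 : ∀ t : ℝ, 0 ≤ f t) (hg0 : ∀ t : ℝ, 0 ≤ g t)
    (h : ∀ t : ℝ, diniUpperRight (fun s => f s ^ 2) t ≤
      ((-2 * μ * f t ^ 2 + 2 * f t * g t : ℝ) : EReal)) :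
    ∀ t : ℝ, diniUpperRight f t ≤ ((-μ * f t + g t : ℝ) : EReal) := by
  intro t
  -- reduce to: for every real b above the target, limsup ≤ b
  suffices H : ∀ b : ℝ, -μ * f t + g t < b → diniUpperRight f t ≤ (b : EReal) by
    by_contra hcon
    push_neg at hcon
    obtain ⟨b, hb1, hb2⟩ := EReal.lt_iff_exists_real_btwn.1 hcon
    have hb1' : -μ * f t + g t < b := by exact_mod_cast hb1
    exact absurd (H b hb1') (not_le.2 hb2)
  intro b hb
  have hpos : ∀ᶠ h' in nhdsWithin (0:ℝ) (Set.Ioi 0), (0:ℝ) < h' :=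
    eventually_mem_nhdsWithin
  have hquot : ∀ᶠ h' in nhdsWithin (0:ℝ) (Set.Ioi 0), (f (t + h') - f t) / h' ≤ b := by
    rcases eq_or_lt_of_le (hf0 t) with hft | hft
    · -- case f t = 0
      have hgt : g t < b := by rw [← hft] at hb; linarith
      set b' := (g t + b) / 2 with hb'def
      have hgb' : g t < b' := by rw [hb'def]; linarith
      have hb'b : b' < b := by rw [hb'def]; linarith
      have hcontg : ∀ᶠ s in nhds t, g s < b' := (hg.continuousAt (x := t)).eventually_lt
        continuousAt_const hgb'
      obtain ⟨δ, hδpos, hδ⟩ := Metric.eventually_nhds_iff.1 hcontg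
      have hIoo : Set.Ioo (0:ℝ) (δ/2) ∈ nhdsWithin (0:ℝ) (Set.Ioi 0) :=
        Ioo_mem_nhdsGT_of_mem ⟨le_refl _, by linarith⟩
      filter_upwards [eventually_mem_nhdsWithin.and (eventually_of_mem hIoo fun x hx => hx)]
        with h' hh'
      obtain ⟨hh'pos, hh'lt⟩ := hh'
      have hkey := keyA f g μ hμ hf hf0 hg0 h t (t + h') (by linarith [hh'lt.1]) b' ?_
      · rw [div_le_iff₀ hh'lt.1]
        have : f (t + h') ≤ f t + b' * h' := by
          simpa using hkey
        nlinarith [hh'lt.1]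
      · intro s hs
        have : |s - t| < δ := by
          rw [abs_lt]
          constructor <;> [linarith [hs.1]; linarith [hs.2, hh'lt.2]]
        exact (hδ this).le
    · -- case f t > 0
      set M := -2 * μ * f t ^ 2 + 2 * f t * g t with hMdef
      have hM : M < 2 * f t * b := by nlinarith
      set r' := (M + 2 * f t * b) / 2 with hr'def
      have hMr' : M < r' := by rw [hr'def]; linarith
      have hr'b : r' < 2 * f t * b := by rw [hr'def]; linarith
      have hev := eventually_slope_lt (fun s => f s ^ 2) t M r' hMr' (h t)
      -- eventually b * (f (t+h') + f t) > r'
      have htendf : Tendsto (fun h' : ℝ => b * (f (t + h') + f t))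
          (nhdsWithin (0:ℝ) (Set.Ioi 0)) (nhds (b * (f t + f t))) := by
        apply Tendsto.mono_left _ nhdsWithin_le_nhds
        have : Tendsto (fun h' : ℝ => t + h') (nhds 0) (nhds t) := by
          simpa using (continuous_add_left t).tendsto 0
        exact (tendsto_const_nhds.mul (((hf.tendsto t).comp this).add tendsto_const_nhds))
      have hgt2 : r' < b * (f t + f t) := by rw [hr'def]; nlinarith
      have hevd : ∀ᶠ h' in nhdsWithin (0:ℝ) (Set.Ioi 0),
          r' < b * (f (t + h') + f t) := htendf.eventually (eventually_gt_nhds hgt2)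
      filter_upwards [hev, hevd, hpos] with h' hq hd hh'
      have hsum : 0 < f (t + h') + f t := by nlinarith [hf0 (t + h')]
      rw [div_le_iff₀ hh']
      rw [div_lt_iff₀ hh'] at hq
      nlinarith [hf0 (t + h'), mul_pos hh' hsum]
  -- conclude limsup ≤ b
  refine limsup_le_of_le ?_ ?_
  · isBoundedDefault
  · filter_upwards [hquot] with h' hh'
    exact_mod_cast hh'
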